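/- Let g(t) = (at+b)/(ct+d) be a Möbius transformation with ad − bc = 1 and c ≠ 0, and let x < y be real numbers such that the pole −d/c satisfies y < −d/c. Then for any t with x < t < y one has (|y+d/c|²/|x+d/c|²) · (|x−t|/|y−t|) < |g(x)−g(t)|/|g(y)−g(t)| < |x−t|/|y−t|. -/

import Mathlib

/-- Let `g(t) = (a t + b)/(c t + d)` be a Möbius transformation with
`a d − b c = 1` and `c ≠ 0`, and let `x < y` be reals with `y` less than the pole `−d/c`.
Then for any `t` with `x < t < y`,
`(|y+d/c|²/|x+d/c|²)·(|x−t|/|y−t|) < |g(x)−g(t)|/|g(y)−g(t)| < |x−t|/|y−t|`. -/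
theorem mobius_distortion_pole_right (a b c d x y t : ℝ)
    (hdet : a * d - b * c = 1) (hc : c ≠ 0)
    (hpole : y < -d / c) (hxt : x < t) (hty : t < y) :
    (|y + d / c| ^ 2 / |x + d / c| ^ 2) * (|x - t| / |y - t|) <
        |(a * x + b) / (c * x + d) - (a * t + b) / (c * t + d)| /
          |(a * y + b) / (c * y + d) - (a * t + b) / (c * t + d)| ∧
    |(a * x + b) / (c * x + d) - (a * t + b) / (c * t + d)| /
        |(a * y + b) / (c * y + d) - (a * t + b) / (c * t + d)| <
      |x - t| / |y - t| := by
  have hnd : -d / c = -(d / c) := neg_div _ _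
  have hxp : x + d / c < 0 := by linarith
  have hyp : y + d / c < 0 := by linarith
  have htp : t + d / c < 0 := by linarith
  have hcx : c * x + d ≠ 0 := by
    intro h
    have : x + d / c = 0 := by field_simp; linarith [h]
    linarith
  have hct : c * t + d ≠ 0 := by
    intro h
    have : t + d / c = 0 := by field_simp; linarith [h]
    linarith
  have hcy : c * y + d ≠ 0 := by
    intro h
    have : y + d / c = 0 := by field_simp; linarith [h]
    linarith
  have e1 : (a * x + b) / (c * x + d) - (a * t + b) / (c * t + d)
      = (x - t) / ((c * x + d) * (c * t + d)) := by
    rw [div_sub_div _ _ hcx hct]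
    congr 1
    linear_combination (x - t) * hdet
  have e2 : (a * y + b) / (c * y + d) - (a * t + b) / (c * t + d)
      = (y - t) / ((c * y + d) * (c * t + d)) := by
    rw [div_sub_div _ _ hcy hct]
    congr 1
    linear_combination (y - t) * hdet
  rw [e1, e2]
  have hA : (0:ℝ) < |x - t| := abs_pos.mpr (by linarith)
  have hB : (0:ℝ) < |y - t| := abs_pos.mpr (by linarith)
  have hU : (0:ℝ) < |c * x + d| := abs_pos.mpr hcx
  have hV : (0:ℝ) < |c * y + d| := abs_pos.mpr hcy
  have hT : (0:ℝ) < |c * t + d| := abs_pos.mpr hct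
  have hUV : |c * y + d| < |c * x + d| := by
    have h1 : c * x + d = c * (x + d / c) := by field_simp
    have h2 : c * y + d = c * (y + d / c) := by field_simp
    rw [h1, h2, abs_mul, abs_mul]
    have : |y + d / c| < |x + d / c| := by
      rw [abs_of_neg hxp, abs_of_neg hyp]; linarith
    exact mul_lt_mul_of_pos_left this (abs_pos.mpr hc)
  have hratio : |(x - t) / ((c * x + d) * (c * t + d))| /
      |(y - t) / ((c * y + d) * (c * t + d))|
      = |x - t| / |y - t| * (|c * y + d| / |c * x + d|) := by
    rw [abs_div, abs_div, abs_mul, abs_mul]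
    rw [div_div_div_eq, div_mul_div_comm]
    rw [div_eq_div_iff (mul_pos (mul_pos hU hT) hB).ne' (mul_pos hB hU).ne']
    ring
  rw [hratio]
  have hsq : |y + d / c| ^ 2 / |x + d / c| ^ 2
      = (|c * y + d| / |c * x + d|) ^ 2 := by
    have h1 : |c * x + d| = |c| * |x + d / c| := by
      rw [← abs_mul]; congr 1; field_simp
    have h2 : |c * y + d| = |c| * |y + d / c| := by
      rw [← abs_mul]; congr 1; field_simp
    have hc' : (0:ℝ) < |c| := abs_pos.mpr hc
    rw [h1, h2, mul_div_mul_left _ _ hc'.ne', div_pow]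
  rw [hsq]
  set r := |c * y + d| / |c * x + d| with hr
  have hr0 : 0 < r := div_pos hV hU
  have hr1 : r < 1 := (div_lt_one hU).mpr hUV
  have hAB : 0 < |x - t| / |y - t| := div_pos hA hB
  constructor
  · have : r ^ 2 < r := by nlinarith
    calc r ^ 2 * (|x - t| / |y - t|) < r * (|x - t| / |y - t|) :=
          mul_lt_mul_of_pos_right this hAB
      _ = |x - t| / |y - t| * r := mul_comm _ _
  · exact mul_lt_of_lt_one_right hAB hr1
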